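/- If M is symmetric with nonnegative entries and positive definite, then 0 ≺ M ⪯ M_i ⪯ L(M); that is, M_i − M and L(M) − M_i are positive semidefinite and M_i is positive definite. (This is the matrix chain underlying the admissibility of the banded family of inner products M_i interpolating between the exact mass matrix M and the lumped mass matrix L(M).) -/

import Mathlib

open Matrix

/-- The mass-lumping operator: `L(A)` is the diagonal matrix whose diagonal entries
are the row sums of `A`, i.e. `L(A)_{mk} = δ_{mk} Σ_j A_{mj}`. -/
noncomputable def lumpMat {n : ℕ} (A : Matrix (Fin n) (Fin n) ℝ) :
    Matrix (Fin n) (Fin n) ℝ :=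
  Matrix.diagonal (fun m => ∑ j, A m j)

/-- The part of `M` within bandwidth `i`: `(D_i)_{jk} = M_{jk}` if `|j − k| ≤ i`,
and `0` otherwise. -/
noncomputable def bandPart {n : ℕ} (i : ℕ) (M : Matrix (Fin n) (Fin n) ℝ) :
    Matrix (Fin n) (Fin n) ℝ :=
  Matrix.of fun j k => if |(j : ℤ) - (k : ℤ)| ≤ (i : ℤ) then M j k else 0

/-- The banded lumped mass matrix `M_i = D_i + L(R_i)` where `M = D_i + R_i`. -/
noncomputable def bandedLumpMat {n : ℕ} (i : ℕ) (M : Matrix (Fin n) (Fin n) ℝ) :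
    Matrix (Fin n) (Fin n) ℝ :=
  bandPart i M + lumpMat (M - bandPart i M)

lemma lump_key {n : ℕ} (A : Matrix (Fin n) (Fin n) ℝ) (hA : A.IsSymm)
    (h : ∀ j k, 0 ≤ A j k) : (lumpMat A - A).PosSemidef := by
  have hsym : ∀ j k, A j k = A k j := fun j k => hA.apply k j
  rw [Matrix.posSemidef_iff_dotProduct_mulVec]
  constructor
  · have hL : (lumpMat A).IsHermitian := by
      simp [lumpMat, Matrix.IsHermitian, Matrix.diagonal_conjTranspose]
    have hAh : A.IsHermitian := by
      ext j k
      simp only [Matrix.conjTranspose_apply, star_trivial]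
      exact hsym k j
    exact hL.sub hAh
  · intro x
    have hQ : dotProduct (star x) ((lumpMat A - A) *ᵥ x)
        = ∑ j, ∑ k, A j k * (x j ^ 2 - x j * x k) := by
      have hmv : lumpMat A *ᵥ x = fun j => (∑ k, A j k) * x j := by
        funext j; simp [lumpMat, Matrix.mulVec_diagonal]
      rw [Matrix.sub_mulVec, dotProduct_sub, hmv]
      simp only [dotProduct, Matrix.mulVec, star_trivial]
      rw [← Finset.sum_sub_distrib]
      refine Finset.sum_congr rfl fun j _ => ?_
      simp only [Finset.sum_mul, Finset.mul_sum]
      rw [← Finset.sum_sub_distrib]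
      refine Finset.sum_congr rfl fun k _ => ?_
      ring
    have hswap : ∑ j, ∑ k, A j k * x k ^ 2 = ∑ j, ∑ k, A j k * x j ^ 2 := by
      rw [Finset.sum_comm]
      refine Finset.sum_congr rfl fun j _ => Finset.sum_congr rfl fun k _ => ?_
      rw [hsym j k]
    have hS : ∑ j, ∑ k, A j k * (x j - x k) ^ 2
        = 2 * ∑ j, ∑ k, A j k * (x j ^ 2 - x j * x k) := by
      have expand : ∀ j k : Fin n, A j k * (x j - x k) ^ 2
          = A j k * (x j ^ 2 - x j * x k) + A j k * x k ^ 2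
            - A j k * x j * x k := by intro j k; ring
      calc ∑ j, ∑ k, A j k * (x j - x k) ^ 2
          = (∑ j, ∑ k, A j k * (x j ^ 2 - x j * x k))
            + (∑ j, ∑ k, A j k * x k ^ 2)
            - ∑ j, ∑ k, A j k * x j * x k := by
            simp only [expand, Finset.sum_add_distrib, Finset.sum_sub_distrib]
        _ = 2 * ∑ j, ∑ k, A j k * (x j ^ 2 - x j * x k) := by
            rw [hswap]
            have : ∀ j k : Fin n, A j k * x j ^ 2 - A j k * x j * x k
                = A j k * (x j ^ 2 - x j * x k) := by intro j k; ring
            simp only [Finset.mul_sum, ← this, Finset.sum_sub_distrib]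
            ring
    have hSnn : 0 ≤ ∑ j, ∑ k, A j k * (x j - x k) ^ 2 :=
      Finset.sum_nonneg fun j _ => Finset.sum_nonneg fun k _ =>
        mul_nonneg (h j k) (sq_nonneg _)
    rw [hQ]
    linarith [hS ▸ hSnn]

lemma lump_add_split {n : ℕ} (M D : Matrix (Fin n) (Fin n) ℝ) :
    lumpMat M = lumpMat D + lumpMat (M - D) := by
  unfold lumpMat
  rw [Matrix.diagonal_add]
  refine congrArg Matrix.diagonal ?_
  funext m
  rw [← Finset.sum_add_distrib]
  simp [Matrix.sub_apply]

/-- If `M` is symmetric with nonnegative entries and positive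
definite, then `0 ≺ M ⪯ M_i ⪯ L(M)`: the matrices `M_i − M` and `L(M) − M_i` are
positive semidefinite and `M_i` is positive definite. -/
theorem stmt15 (n : ℕ) (hn : 1 ≤ n) (i : ℕ) (hi : i ≤ n - 1)
    (M : Matrix (Fin n) (Fin n) ℝ)
    (hsymm : M.IsSymm) (hnonneg : ∀ j k, 0 ≤ M j k) (hpos : M.PosDef) :
    (bandedLumpMat i M - M).PosSemidef ∧
    (lumpMat M - bandedLumpMat i M).PosSemidef ∧
    (bandedLumpMat i M).PosDef := by
  set D := bandPart i M with hD
  set R := M - D with hR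
  have hDsymm : D.IsSymm := by
    ext j k
    simp only [hD, bandPart, Matrix.transpose_apply, Matrix.of_apply]
    rw [abs_sub_comm]
    split_ifs with hjk
    · exact hsymm.apply j k ▸ rfl
    · rfl
  have hDnn : ∀ j k, 0 ≤ D j k := by
    intro j k
    simp only [hD, bandPart, Matrix.of_apply]
    split_ifs
    · exact hnonneg j k
    · exact le_refl 0
  have hRsymm : R.IsSymm := hsymm.sub hDsymm
  have hRnn : ∀ j k, 0 ≤ R j k := by
    intro j k
    simp only [hR, Matrix.sub_apply, hD, bandPart, Matrix.of_apply]
    split_ifs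
    · simp
    · simpa using hnonneg j k
  have key1 : bandedLumpMat i M - M = lumpMat R - R := by
    rw [hR, hD]
    unfold bandedLumpMat
    abel
  have psd1 : (bandedLumpMat i M - M).PosSemidef := by
    rw [key1]; exact lump_key R hRsymm hRnn
  refine ⟨psd1, ?_, ?_⟩
  · have key2 : lumpMat M - bandedLumpMat i M = lumpMat D - D := by
      rw [lump_add_split M D, hD]
      unfold bandedLumpMat
      abel
    rw [key2]
    exact lump_key D hDsymm hDnn
  · have : bandedLumpMat i M = M + (bandedLumpMat i M - M) := by abel
    rw [this]
    exact hpos.add_posSemidef psd1
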